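/- (Induction recurrence used in the convergence proof.) Let Q > 0 and let a : ℕ → ℝ be a sequence with 0 ≤ a(k) for all k ≥ 1, a(1) ≤ Q², and a(k+1) ≤ a(k) − a(k)²/(8Q²) for all k ≥ 1. Then a(k) ≤ 8Q²/(k+1) for all k ≥ 1. -/

import Mathlib

/-- Induction recurrence used in the convergence proof: if `a k ≥ 0` for
`k ≥ 1`, `a 1 ≤ Q²`, and `a (k+1) ≤ a k - (a k)²/(8Q²)` for all `k ≥ 1`,
then `a k ≤ 8Q²/(k+1)` for all `k ≥ 1`. -/
theorem stmt_11 (Q : ℝ) (hQ : 0 < Q) (a : ℕ → ℝ)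
    (hnn : ∀ k, 1 ≤ k → 0 ≤ a k)
    (h1 : a 1 ≤ Q ^ 2)
    (hrec : ∀ k, 1 ≤ k → a (k + 1) ≤ a k - (a k) ^ 2 / (8 * Q ^ 2)) :
    ∀ k, 1 ≤ k → a k ≤ 8 * Q ^ 2 / ((k : ℝ) + 1) := by
  have hQ2 : (0:ℝ) < Q ^ 2 := by positivity
  intro k hk
  induction k with
  | zero => omega
  | succ n ih =>
    rcases Nat.eq_or_lt_of_le hk with h | h
    · simp only [← h]
      push_cast
      rw [le_div_iff₀ (by norm_num : (0:ℝ) < 1 + 1)]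
      nlinarith
    · have hn : 1 ≤ n := by omega
      have ihn := ih hn
      have hrn := hrec n hn
      have hnnn := hnn n hn
      have hc : (2:ℝ) ≤ (n:ℝ) + 1 := by
        have : (1:ℝ) ≤ (n:ℝ) := by exact_mod_cast hn
        linarith
      set c : ℝ := (n:ℝ) + 1 with hcdef
      have hcpos : (0:ℝ) < c := by linarith
      have hcase : a n ≤ 8 * Q ^ 2 / c := ihn
      push_cast
      have : a (n+1) ≤ a n - (a n)^2 / (8 * Q^2) := hrn
      rw [le_div_iff₀ (by linarith : (0:ℝ) < (n:ℝ) + 1 + 1)]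
      rw [le_div_iff₀ hcpos] at hcase
      have h8 : (0:ℝ) < 8 * Q ^ 2 := by positivity
      rw [sub_div' (ne_of_gt h8)] at this
      rw [le_div_iff₀ h8] at this
      have key : (c + 1) * (a n * (8 * Q ^ 2) - (a n) ^ 2) ≤ (8 * Q ^ 2) ^ 2 := by
        nlinarith [mul_nonneg (by linarith : (0:ℝ) ≤ c + 1) (sq_nonneg (a n * c - 8 * Q ^ 2)),
          mul_nonneg (mul_nonneg (sub_nonneg.mpr hcase) h8.le)
            (mul_nonneg (by linarith : (0:ℝ) ≤ c + 1) (by linarith : (0:ℝ) ≤ c - 2)),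
          mul_pos hcpos hcpos, sq_nonneg (a n * c - 8 * Q ^ 2)]
      show a (n + 1) * (c + 1) ≤ 8 * Q ^ 2
      nlinarith [mul_le_mul_of_nonneg_right this (by linarith : (0:ℝ) ≤ c + 1), h8, key]
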